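/- Let γ > 1, H(ϱ) = ϱ^γ/(γ−1), and H(ϱ|r) = H(ϱ) − H(r) − H'(r)(ϱ − r). For any compact set K ⊂ (0,∞) there exist constants c₃, c₄ > 0 such that for every ϱ ≥ 0 and every r ∈ K: c₃ (|ϱ − r|² 𝟙_{|ϱ−r|<1} + |ϱ − r|^γ 𝟙_{|ϱ−r|≥1}) ≤ H(ϱ|r) ≤ c₄ (|ϱ − r|² 𝟙_{|ϱ−r|<1} + |ϱ − r|^γ 𝟙_{|ϱ−r|≥1}). -/

import Mathlib

open Set

lemma rpow_between {p q x e : ℝ} (hp : 0 < p) (hpx : p ≤ x) (hxq : x ≤ q) :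
    min (p ^ e) (q ^ e) ≤ x ^ e ∧ x ^ e ≤ max (p ^ e) (q ^ e) := by
  rcases le_total 0 e with he | he
  · exact ⟨le_trans (min_le_left _ _) (Real.rpow_le_rpow hp.le hpx he),
      le_trans (Real.rpow_le_rpow (hp.trans_le hpx).le hxq he) (le_max_right _ _)⟩
  · exact ⟨le_trans (min_le_right _ _) (Real.rpow_le_rpow_of_nonpos (hp.trans_le hpx) hxq he),
      le_trans (Real.rpow_le_rpow_of_nonpos hp hpx he) (le_max_left _ _)⟩

lemma slope_bounds (γ T : ℝ) (hγ : 1 < γ) {u v : ℝ} (hu : 1/2 ≤ u) (huv : u ≤ v) (hv : v ≤ T) :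
    (γ-1) * min ((1/2:ℝ)^(γ-2)) (T^(γ-2)) * (v-u) ≤ v^(γ-1) - u^(γ-1) ∧
    v^(γ-1) - u^(γ-1) ≤ (γ-1) * max ((1/2:ℝ)^(γ-2)) (T^(γ-2)) * (v-u) := by
  have hg1 : (0:ℝ) < γ - 1 := by linarith
  rcases eq_or_lt_of_le huv with rfl | huv
  · simp
  · have hcont : Continuous fun x : ℝ => x ^ (γ-1) :=
      continuous_iff_continuousAt.2 fun x =>
        Real.continuousAt_rpow_const x _ (Or.inr (by linarith))
    obtain ⟨c, hc, hceq⟩ := exists_hasDerivAt_eq_slope (fun x : ℝ => x ^ (γ-1))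
      (fun x => (γ-1) * x ^ (γ-2)) huv hcont.continuousOn
      (fun x hx => by
        have hx0 : (0:ℝ) < x := lt_of_lt_of_le (by linarith [hx.1]) le_rfl
        have := Real.hasDerivAt_rpow_const (x := x) (p := γ-1) (Or.inl hx0.ne')
        have h12 : γ - 1 - 1 = γ - 2 := by ring
        rwa [h12] at this)
    have hc1 : 1/2 ≤ c := hu.trans hc.1.le
    have hc2 : c ≤ T := hc.2.le.trans hv
    have hvu : (0:ℝ) < v - u := by linarith
    have heq : v ^ (γ-1) - u ^ (γ-1) = (γ-1) * c ^ (γ-2) * (v-u) := by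
      field_simp at hceq; linarith [hceq]
    obtain ⟨hmin, hmax⟩ := rpow_between (by norm_num : (0:ℝ) < 1/2) hc1 hc2 (e := γ-2)
    constructor
    · rw [heq]
      have := mul_le_mul_of_nonneg_right (mul_le_mul_of_nonneg_left hmin hg1.le) hvu.le
      linarith
    · rw [heq]
      have := mul_le_mul_of_nonneg_right (mul_le_mul_of_nonneg_left hmax hg1.le) hvu.le
      linarith

set_option maxHeartbeats 1600000 in
lemma entropy_core (γ T : ℝ) (hγ : 1 < γ) (hT : 2 ≤ T) :
    ∃ m > (0:ℝ), ∃ M > (0:ℝ), ∀ t : ℝ, 0 ≤ t → t ≤ T →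
      m * (t-1)^2 ≤ t^γ - 1 - γ*(t-1) ∧ t^γ - 1 - γ*(t-1) ≤ M * (t-1)^2 := by
  have hg1 : (0:ℝ) < γ - 1 := by linarith
  have hγ0 : (0:ℝ) < γ := by linarith
  have hT0 : (0:ℝ) < T := by linarith
  have h2 : (0:ℝ) < 1/2 := by norm_num
  set L : ℝ := (γ-1) * min ((1/2:ℝ)^(γ-2)) (T^(γ-2)) with hLdef
  set U : ℝ := (γ-1) * max ((1/2:ℝ)^(γ-2)) (T^(γ-2)) with hUdef
  have hL0 : 0 < L :=
    mul_pos hg1 (lt_min (Real.rpow_pos_of_pos h2 _) (Real.rpow_pos_of_pos hT0 _))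
  have hU0 : 0 < U :=
    mul_pos hg1 (lt_of_lt_of_le (Real.rpow_pos_of_pos h2 _) (le_max_left _ _))
  -- continuity of auxiliary functions
  have hcγ : Continuous fun t : ℝ => t ^ γ :=
    continuous_iff_continuousAt.2 fun x =>
      Real.continuousAt_rpow_const x _ (Or.inr (by linarith))
  -- derivative helper
  have hd : ∀ (c : ℝ) (x : ℝ), x ≠ 0 →
      HasDerivAt (fun t : ℝ => t^γ - 1 - γ*(t-1) - c*(t-1)^2)
        (γ * x^(γ-1) - γ - c*(2*(x-1))) x := by
    intro c x hx
    have h1 : HasDerivAt (fun t : ℝ => t ^ γ) (γ * x^(γ-1)) x :=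
      Real.hasDerivAt_rpow_const (Or.inl hx)
    have h2' : HasDerivAt (fun t : ℝ => (t-1)^2) (2*(x-1)) x := by
      have := (((hasDerivAt_id x).sub_const 1).pow 2)
      simpa [Pi.pow_def] using this
    have h3 : HasDerivAt (fun t : ℝ => γ*(t-1)) γ x := by
      simpa using ((hasDerivAt_id x).sub_const 1).const_mul γ
    exact ((h1.sub_const 1).sub h3).sub (h2'.const_mul c)
  have hcont : ∀ c : ℝ, Continuous (fun t : ℝ => t^γ - 1 - γ*(t-1) - c*(t-1)^2) := by
    intro c
    exact ((hcγ.sub continuous_const).sub (continuous_const.mul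
      (continuous_id.sub continuous_const))).sub
      (continuous_const.mul ((continuous_id.sub continuous_const).pow 2))
  -- on [1,T] : γ*L/2 lower, γ*U/2 upper
  have key_low_right : ∀ t ∈ Icc (1:ℝ) T, γ*L/2 * (t-1)^2 ≤ t^γ - 1 - γ*(t-1) := by
    intro t ht
    have mono : MonotoneOn (fun t : ℝ => t^γ - 1 - γ*(t-1) - (γ*L/2)*(t-1)^2) (Icc 1 T) := by
      apply monotoneOn_of_deriv_nonneg (convex_Icc 1 T) (hcont _).continuousOn
      · rw [interior_Icc]
        exact fun x hx => ((hd _ x (by linarith [hx.1] : x ≠ 0)).differentiableAt).differentiableWithinAt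
      · rw [interior_Icc]
        intro x hx
        rw [(hd (γ*L/2) x (by intro h; rw [h] at hx; exact absurd hx.1 (by norm_num))).deriv]
        have hsl := (slope_bounds γ T hγ (u := 1) (v := x) (by norm_num) hx.1.le hx.2.le).1
        rw [Real.one_rpow] at hsl
        have : L * (x - 1) ≤ x ^ (γ-1) - 1 := by rw [hLdef]; linarith [hsl]
        nlinarith [this, hγ0]
    have h0 : (fun t : ℝ => t^γ - 1 - γ*(t-1) - (γ*L/2)*(t-1)^2) 1 = 0 := by
      simp [Real.one_rpow]
    have := mono (left_mem_Icc.2 (by linarith)) ht ht.1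
    rw [h0] at this
    simpa using by linarith [this]
  have key_up_right : ∀ t ∈ Icc (1:ℝ) T, t^γ - 1 - γ*(t-1) ≤ γ*U/2 * (t-1)^2 := by
    intro t ht
    have anti : AntitoneOn (fun t : ℝ => t^γ - 1 - γ*(t-1) - (γ*U/2)*(t-1)^2) (Icc 1 T) := by
      apply antitoneOn_of_deriv_nonpos (convex_Icc 1 T) (hcont _).continuousOn
      · rw [interior_Icc]
        exact fun x hx => ((hd _ x (by linarith [hx.1] : x ≠ 0)).differentiableAt).differentiableWithinAt
      · rw [interior_Icc]
        intro x hx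
        rw [(hd (γ*U/2) x (by intro h; rw [h] at hx; exact absurd hx.1 (by norm_num))).deriv]
        have hsl := (slope_bounds γ T hγ (u := 1) (v := x) (by norm_num) hx.1.le hx.2.le).2
        rw [Real.one_rpow] at hsl
        have : x ^ (γ-1) - 1 ≤ U * (x - 1) := by rw [hUdef]; linarith [hsl]
        nlinarith [this, hγ0]
    have h0 : (fun t : ℝ => t^γ - 1 - γ*(t-1) - (γ*U/2)*(t-1)^2) 1 = 0 := by
      simp [Real.one_rpow]
    have := anti (left_mem_Icc.2 (by linarith)) ht ht.1
    rw [h0] at this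
    simpa using by linarith [this]
  -- on [1/2,1]
  have key_low_mid : ∀ t ∈ Icc (1/2:ℝ) 1, γ*L/2 * (t-1)^2 ≤ t^γ - 1 - γ*(t-1) := by
    intro t ht
    have anti : AntitoneOn (fun t : ℝ => t^γ - 1 - γ*(t-1) - (γ*L/2)*(t-1)^2) (Icc (1/2) 1) := by
      apply antitoneOn_of_deriv_nonpos (convex_Icc _ _) (hcont _).continuousOn
      · rw [interior_Icc]
        exact fun x hx => ((hd _ x (by linarith [hx.1] : x ≠ 0)).differentiableAt).differentiableWithinAt
      · rw [interior_Icc]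
        intro x hx
        rw [(hd (γ*L/2) x (by intro h; rw [h] at hx; exact absurd hx.1 (by norm_num))).deriv]
        have hsl := (slope_bounds γ T hγ (u := x) (v := 1) hx.1.le hx.2.le (by linarith)).1
        rw [Real.one_rpow] at hsl
        have : L * (1 - x) ≤ 1 - x ^ (γ-1) := by rw [hLdef]; linarith [hsl]
        nlinarith [this, hγ0]
    have h0 : (fun t : ℝ => t^γ - 1 - γ*(t-1) - (γ*L/2)*(t-1)^2) 1 = 0 := by
      simp [Real.one_rpow]
    have := anti ht (right_mem_Icc.2 (by norm_num)) ht.2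
    rw [h0] at this
    simpa using by linarith [this]
  have key_up_mid : ∀ t ∈ Icc (1/2:ℝ) 1, t^γ - 1 - γ*(t-1) ≤ γ*U/2 * (t-1)^2 := by
    intro t ht
    have mono : MonotoneOn (fun t : ℝ => t^γ - 1 - γ*(t-1) - (γ*U/2)*(t-1)^2) (Icc (1/2) 1) := by
      apply monotoneOn_of_deriv_nonneg (convex_Icc _ _) (hcont _).continuousOn
      · rw [interior_Icc]
        exact fun x hx => ((hd _ x (by linarith [hx.1] : x ≠ 0)).differentiableAt).differentiableWithinAt
      · rw [interior_Icc]
        intro x hx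
        rw [(hd (γ*U/2) x (by intro h; rw [h] at hx; exact absurd hx.1 (by norm_num))).deriv]
        have hsl := (slope_bounds γ T hγ (u := x) (v := 1) hx.1.le hx.2.le (by linarith)).2
        rw [Real.one_rpow] at hsl
        have : 1 - x ^ (γ-1) ≤ U * (1 - x) := by rw [hUdef]; linarith [hsl]
        nlinarith [this, hγ0]
    have h0 : (fun t : ℝ => t^γ - 1 - γ*(t-1) - (γ*U/2)*(t-1)^2) 1 = 0 := by
      simp [Real.one_rpow]
    have := mono ht (right_mem_Icc.2 (by norm_num)) ht.2
    rw [h0] at this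
    simpa using by linarith [this]
  -- g is antitone on [0,1]
  have hgc0 : Continuous (fun t : ℝ => t^γ - 1 - γ*(t-1)) :=
    (hcγ.sub continuous_const).sub (continuous_const.mul (continuous_id.sub continuous_const))
  have g_anti : AntitoneOn (fun t : ℝ => t^γ - 1 - γ*(t-1)) (Icc (0:ℝ) 1) := by
    apply antitoneOn_of_deriv_nonpos (convex_Icc _ _) hgc0.continuousOn
    · rw [interior_Icc]
      intro x hx
      have h1 : HasDerivAt (fun t : ℝ => t^γ - 1 - γ*(t-1)) (γ * x^(γ-1) - γ) x := by
        have h1' : HasDerivAt (fun t : ℝ => t ^ γ) (γ * x^(γ-1)) x :=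
          Real.hasDerivAt_rpow_const (Or.inl (ne_of_gt hx.1))
        have h3 : HasDerivAt (fun t : ℝ => γ*(t-1)) γ x := by
          simpa using ((hasDerivAt_id x).sub_const 1).const_mul γ
        exact (h1'.sub_const 1).sub h3
      exact h1.differentiableAt.differentiableWithinAt
    · rw [interior_Icc]
      intro x hx
      have h1' : HasDerivAt (fun t : ℝ => t ^ γ) (γ * x^(γ-1)) x :=
        Real.hasDerivAt_rpow_const (Or.inl (ne_of_gt hx.1))
      have h3 : HasDerivAt (fun t : ℝ => γ*(t-1)) γ x := by
        simpa using ((hasDerivAt_id x).sub_const 1).const_mul γ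
      rw [show deriv (fun t : ℝ => t^γ - 1 - γ*(t-1)) x = γ * x^(γ-1) - γ from ((h1'.sub_const 1).sub h3).deriv]
      have : x ^ (γ-1) ≤ 1 := Real.rpow_le_one hx.1.le hx.2.le (by linarith)
      nlinarith [this, hγ0]
  refine ⟨γ*L/2/4, by positivity, max (γ*U/2) (2*(γ-1)), lt_max_of_lt_left (by positivity), ?_⟩
  intro t ht0 htT
  rcases le_total 1 t with h1t | ht1
  · have hmem : t ∈ Icc (1:ℝ) T := ⟨h1t, htT⟩
    have hl := key_low_right t hmem
    have hu := key_up_right t hmem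
    constructor
    · linarith [hl, mul_le_mul_of_nonneg_right
        (show γ*L/2/4 ≤ γ*L/2 by linarith [mul_pos hγ0 hL0]) (sq_nonneg (t-1))]
    · linarith [hu, mul_le_mul_of_nonneg_right
        (le_max_left (γ*U/2) (2*(γ-1))) (sq_nonneg (t-1))]
  · rcases le_total (1/2 : ℝ) t with hht | hht
    · have hmem : t ∈ Icc (1/2:ℝ) 1 := ⟨hht, ht1⟩
      have hl := key_low_mid t hmem
      have hu := key_up_mid t hmem
      constructor
      · linarith [hl, mul_le_mul_of_nonneg_right
          (show γ*L/2/4 ≤ γ*L/2 by linarith [mul_pos hγ0 hL0]) (sq_nonneg (t-1))]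
      · linarith [hu, mul_le_mul_of_nonneg_right
          (le_max_left (γ*U/2) (2*(γ-1))) (sq_nonneg (t-1))]
    · -- t ∈ [0,1/2]
      have hghalf : γ*L/2 * ((1/2:ℝ)-1)^2 ≤ (1/2:ℝ)^γ - 1 - γ*((1/2:ℝ)-1) :=
        key_low_mid (1/2) (by constructor <;> norm_num)
      have hmono := g_anti ⟨ht0, by linarith⟩ (⟨by norm_num, by norm_num⟩ : (1/2:ℝ) ∈ Icc (0:ℝ) 1) hht
      -- hmono : g (1/2) ≤ g t
      have hsq : (t-1)^2 ≤ 1 := by nlinarith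
      have hsq2 : 1/4 ≤ (t-1)^2 := by nlinarith
      have hL4 : (0:ℝ) ≤ γ*L/2/4 := by linarith [mul_pos hγ0 hL0]
      constructor
      · have hq : ((1/2:ℝ)-1)^2 = 1/4 := by norm_num
        rw [hq] at hghalf
        have hA : γ*L/2/4 ≤ (1/2:ℝ)^γ - 1 - γ*((1/2:ℝ)-1) := by linarith [hghalf]
        have h2' : γ*L/2/4 * (t-1)^2 ≤ γ*L/2/4 := by
          have := mul_le_mul_of_nonneg_left hsq hL4
          linarith [this]
        calc γ*L/2/4 * (t-1)^2 ≤ γ*L/2/4 := h2'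
          _ ≤ (1/2:ℝ)^γ - 1 - γ*((1/2:ℝ)-1) := hA
          _ ≤ t^γ - 1 - γ*(t-1) := hmono
      · -- upper: t^γ ≤ t on [0,1]
        have htγ : t^γ ≤ t := by
          rcases eq_or_lt_of_le ht0 with heq | ht0'
          · rw [← heq, Real.zero_rpow (ne_of_gt hγ0)]
          · calc t^γ ≤ t^(1:ℝ) :=
                Real.rpow_le_rpow_of_exponent_ge ht0' (by linarith) (by linarith)
              _ = t := Real.rpow_one t
        have h1 : t^γ - 1 - γ*(t-1) ≤ (γ-1)*(1-t) := by nlinarith [htγ]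
        have h2' : (1-t) ≤ 2*(1-t)^2 := by nlinarith
        have h3 : (2*(γ-1)) ≤ max (γ*U/2) (2*(γ-1)) := le_max_right _ _
        have hsqe : (t-1)^2 = (1-t)^2 := by ring
        have s1 : (γ-1)*(1-t) ≤ (γ-1)*(2*(1-t)^2) := mul_le_mul_of_nonneg_left h2' hg1.le
        have s2 : (2*(γ-1))*(1-t)^2 ≤ (max (γ*U/2) (2*(γ-1)))*(1-t)^2 :=
          mul_le_mul_of_nonneg_right h3 (sq_nonneg (1-t))
        calc t^γ - 1 - γ*(t-1) ≤ (γ-1)*(1-t) := h1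
          _ ≤ (γ-1)*(2*(1-t)^2) := s1
          _ = (2*(γ-1))*(1-t)^2 := by ring
          _ ≤ (max (γ*U/2) (2*(γ-1)))*(1-t)^2 := s2
          _ = (max (γ*U/2) (2*(γ-1)))*(t-1)^2 := by rw [hsqe]

set_option maxHeartbeats 1600000 in
/-- Two-sided comparison of the relative entropy `H(ϱ|r)` with quadratic behavior near `r`
and power-`γ` behavior at infinity, uniformly for `r` in a compact subset of `(0,∞)`. -/
theorem relative_entropy_two_sided_bounds (γ : ℝ) (hγ : 1 < γ)
    (K : Set ℝ) (hK : IsCompact K) (hK' : K ⊆ Set.Ioi (0 : ℝ)) :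
    ∃ c₃ > (0 : ℝ), ∃ c₄ > (0 : ℝ), ∀ ϱ r : ℝ, 0 ≤ ϱ → r ∈ K →
      c₃ * (if |ϱ - r| < 1 then |ϱ - r| ^ (2 : ℝ) else |ϱ - r| ^ γ) ≤
          ϱ ^ γ / (γ - 1) - r ^ γ / (γ - 1) - (γ * r ^ (γ - 1) / (γ - 1)) * (ϱ - r) ∧
        ϱ ^ γ / (γ - 1) - r ^ γ / (γ - 1) - (γ * r ^ (γ - 1) / (γ - 1)) * (ϱ - r) ≤
          c₄ * (if |ϱ - r| < 1 then |ϱ - r| ^ (2 : ℝ) else |ϱ - r| ^ γ) := by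
  have hγ1 : (0:ℝ) < γ - 1 := by linarith
  have hγ0 : (0:ℝ) < γ := by linarith
  rcases K.eq_empty_or_nonempty with rfl | hne
  · exact ⟨1, one_pos, 1, one_pos, fun ϱ r _ hr => absurd hr (Set.notMem_empty r)⟩
  obtain ⟨a, haK, ha_lb⟩ := hK.exists_isLeast hne
  obtain ⟨b, hbK, hb_ub⟩ := hK.exists_isGreatest hne
  have ha0 : 0 < a := hK' haK
  have hab : a ≤ b := ha_lb hbK
  have hb0 : 0 < b := lt_of_lt_of_le ha0 hab
  have htend := (tendsto_rpow_atTop (show (0:ℝ) < γ-1 by linarith)).eventually_ge_atTop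
    (2*b^γ + 2*γ*b^(γ-1))
  obtain ⟨R₀, hR₀⟩ := Filter.eventually_atTop.1 htend
  set R := max R₀ (2*b+2) with hRdef
  have hRb : 2*b+2 ≤ R := le_max_right _ _
  have hR2 : (2:ℝ) ≤ R := by linarith
  have hR1 : (1:ℝ) ≤ R := by linarith
  have hR0 : (0:ℝ) < R := by linarith
  have hRγpos : 0 < R^γ := Real.rpow_pos_of_pos hR0 γ
  have hRγ1 : 1 ≤ R^γ := by
    calc (1:ℝ) = 1^γ := (Real.one_rpow γ).symm
      _ ≤ R^γ := Real.rpow_le_rpow zero_le_one hR1 hγ0.le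
  set T := R / a with hTdef
  have hT2 : 2 ≤ T := by
    rw [hTdef, le_div_iff₀ ha0]; linarith
  obtain ⟨m, hm0, M, hM0, hcore⟩ := entropy_core γ T hγ hT2
  set rmin := min (a^(γ-2)) (b^(γ-2)) with hrmindef
  set rmax := max (a^(γ-2)) (b^(γ-2)) with hrmaxdef
  have hrmin0 : 0 < rmin := lt_min (Real.rpow_pos_of_pos ha0 _) (Real.rpow_pos_of_pos hb0 _)
  have hrmax0 : 0 < rmax := lt_of_lt_of_le (Real.rpow_pos_of_pos ha0 _) (le_max_left _ _)
  set c3' := m*rmin/(γ-1) with hc3'def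
  set c4' := M*rmax/(γ-1) with hc4'def
  have hc3'0 : 0 < c3' := div_pos (mul_pos hm0 hrmin0) hγ1
  have hc4'0 : 0 < c4' := div_pos (mul_pos hM0 hrmax0) hγ1
  have hR2pos : (0:ℝ) < R^2 := by positivity
  have hR21 : (1:ℝ) ≤ R^2 := by
    rw [pow_two]
    calc (1:ℝ) = 1*1 := by ring
      _ ≤ R*R := mul_le_mul hR1 hR1 zero_le_one (le_trans zero_le_one hR1)
  set c₃ := min (c3'/R^γ) (1/(2*(γ-1))) with hc₃def
  set c₄ := max (c4'*R^2) ((2:ℝ)^γ/(γ-1)) with hc₄def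
  have hc₃0 : 0 < c₃ := lt_min (div_pos hc3'0 hRγpos) (by positivity)
  have hc₄0 : 0 < c₄ := lt_of_lt_of_le (mul_pos hc4'0 hR2pos) (le_max_left _ _)
  refine ⟨c₃, hc₃0, c₄, hc₄0, ?_⟩
  intro ϱ r hϱ0 hrK
  have har : a ≤ r := ha_lb hrK
  have hrb : r ≤ b := hb_ub hrK
  have hr0 : 0 < r := lt_of_lt_of_le ha0 har
  have hEeq : ϱ^γ/(γ-1) - r^γ/(γ-1) - (γ*r^(γ-1)/(γ-1))*(ϱ-r)
      = (ϱ^γ - r^γ - γ*r^(γ-1)*(ϱ-r))/(γ-1) := by field_simp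
  rw [hEeq]
  set N := ϱ^γ - r^γ - γ*r^(γ-1)*(ϱ-r) with hNdef
  have hrγ10 : 0 ≤ r^(γ-1) := Real.rpow_nonneg hr0.le _
  have hrγ0 : (0:ℝ) ≤ r^γ := Real.rpow_nonneg hr0.le _
  -- bounded region estimate
  have bounded : ϱ ≤ R → m*rmin*(ϱ-r)^2 ≤ N ∧ N ≤ M*rmax*(ϱ-r)^2 := by
    intro hϱR
    set t := ϱ / r with htdef
    have ht0 : 0 ≤ t := div_nonneg hϱ0 hr0.le
    have htT : t ≤ T := div_le_div₀ hR0.le hϱR ha0 har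
    have hrt : r * t = ϱ := by rw [htdef, mul_comm, div_mul_cancel₀ _ hr0.ne']
    have h3 : ϱ - r = r * (t - 1) := by rw [mul_sub, hrt, mul_one]
    have h2r : r^(γ-1) * r = r^γ := by
      rw [← Real.rpow_add_one hr0.ne' (γ-1), sub_add_cancel]
    have hN : N = r^γ * (t^γ - 1 - γ*(t-1)) := by
      have h1 : ϱ^γ = r^γ * t^γ := by rw [← Real.mul_rpow hr0.le ht0, hrt]
      rw [hNdef, h1, h3]
      linear_combination (-(γ*(t-1))) * h2r
    have hr2γ : r^(γ-2) * r^2 = r^γ := by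
      rw [← Real.rpow_natCast r 2, ← Real.rpow_add hr0]; norm_num
    have hB : r^γ * (t-1)^2 = r^(γ-2) * (ϱ-r)^2 := by
      rw [h3]
      linear_combination (-((t-1)^2)) * hr2γ
    have hrr := rpow_between ha0 har hrb (e := γ-2)
    have hcoret := hcore t ht0 htT
    have hrγ : 0 < r^γ := Real.rpow_pos_of_pos hr0 γ
    constructor
    · have s0 : rmin*(ϱ-r)^2 ≤ r^(γ-2)*(ϱ-r)^2 :=
        mul_le_mul_of_nonneg_right hrr.1 (sq_nonneg _)
      have s1 : m*(rmin*(ϱ-r)^2) ≤ m*(r^(γ-2)*(ϱ-r)^2) := mul_le_mul_of_nonneg_left s0 hm0.le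
      have s2 : r^γ*(m*(t-1)^2) ≤ r^γ*(t^γ - 1 - γ*(t-1)) :=
        mul_le_mul_of_nonneg_left hcoret.1 hrγ.le
      have s3 : m*(r^(γ-2)*(ϱ-r)^2) = r^γ*(m*(t-1)^2) := by rw [← hB]; ring
      calc m*rmin*(ϱ-r)^2 = m*(rmin*(ϱ-r)^2) := by ring
        _ ≤ m*(r^(γ-2)*(ϱ-r)^2) := s1
        _ = r^γ*(m*(t-1)^2) := s3
        _ ≤ r^γ*(t^γ-1-γ*(t-1)) := s2
        _ = N := hN.symm
    · have s0 : r^(γ-2)*(ϱ-r)^2 ≤ rmax*(ϱ-r)^2 :=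
        mul_le_mul_of_nonneg_right hrr.2 (sq_nonneg _)
      have s1 : M*(r^(γ-2)*(ϱ-r)^2) ≤ M*(rmax*(ϱ-r)^2) := mul_le_mul_of_nonneg_left s0 hM0.le
      have s2 : r^γ*(t^γ - 1 - γ*(t-1)) ≤ r^γ*(M*(t-1)^2) :=
        mul_le_mul_of_nonneg_left hcoret.2 hrγ.le
      have s3 : M*(r^(γ-2)*(ϱ-r)^2) = r^γ*(M*(t-1)^2) := by rw [← hB]; ring
      calc N = r^γ*(t^γ-1-γ*(t-1)) := hN
        _ ≤ r^γ*(M*(t-1)^2) := s2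
        _ = M*(r^(γ-2)*(ϱ-r)^2) := s3.symm
        _ ≤ M*(rmax*(ϱ-r)^2) := s1
        _ = M*rmax*(ϱ-r)^2 := by ring
  by_cases hd1 : |ϱ - r| < 1
  · rw [if_pos hd1]
    have hBeq : |ϱ-r|^(2:ℝ) = (ϱ-r)^2 := by rw [Real.rpow_two, sq_abs]
    rw [hBeq]
    have habs := abs_lt.1 hd1
    have hϱR : ϱ ≤ R := by linarith [habs.2]
    obtain ⟨hlow, hhigh⟩ := bounded hϱR
    have hc3A : c₃ * (γ-1) ≤ m*rmin := by
      have h1 : c₃ ≤ c3'/R^γ := min_le_left _ _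
      have h2 : c3'/R^γ ≤ c3' := div_le_self hc3'0.le hRγ1
      calc c₃ * (γ-1) ≤ c3' * (γ-1) := mul_le_mul_of_nonneg_right (h1.trans h2) hγ1.le
        _ = m*rmin := div_mul_cancel₀ _ hγ1.ne'
    have hc4A : M*rmax ≤ c₄ * (γ-1) := by
      have h2 : c4' ≤ c4'*R^2 := le_mul_of_one_le_right hc4'0.le hR21
      have h1 : c4'*R^2 ≤ c₄ := le_max_left _ _
      calc M*rmax = c4'*(γ-1) := (div_mul_cancel₀ _ hγ1.ne').symm
        _ ≤ c₄*(γ-1) := mul_le_mul_of_nonneg_right (h2.trans h1) hγ1.le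
    constructor
    · rw [le_div_iff₀ hγ1]
      calc c₃*(ϱ-r)^2*(γ-1) = (c₃*(γ-1))*(ϱ-r)^2 := by ring
        _ ≤ (m*rmin)*(ϱ-r)^2 := mul_le_mul_of_nonneg_right hc3A (sq_nonneg _)
        _ ≤ N := by linarith [hlow]
    · rw [div_le_iff₀ hγ1]
      calc N ≤ M*rmax*(ϱ-r)^2 := hhigh
        _ = (M*rmax)*(ϱ-r)^2 := by ring
        _ ≤ (c₄*(γ-1))*(ϱ-r)^2 := mul_le_mul_of_nonneg_right hc4A (sq_nonneg _)
        _ = c₄*(ϱ-r)^2*(γ-1) := by ring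
  · rw [if_neg hd1]
    have hd1' : 1 ≤ |ϱ - r| := not_lt.1 hd1
    have hγB0 : 0 ≤ |ϱ-r|^γ := Real.rpow_nonneg (abs_nonneg _) γ
    have hB1 : 1 ≤ |ϱ-r|^γ := by
      calc (1:ℝ) = 1^γ := (Real.one_rpow γ).symm
        _ ≤ |ϱ-r|^γ := Real.rpow_le_rpow zero_le_one hd1' hγ0.le
    by_cases hϱR : ϱ ≤ R
    · obtain ⟨hlow, hhigh⟩ := bounded hϱR
      have hdR : |ϱ - r| ≤ R := by
        rw [abs_le]; constructor <;> [linarith; linarith]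
      have hBR : |ϱ-r|^γ ≤ R^γ := Real.rpow_le_rpow (abs_nonneg _) hdR hγ0.le
      have hd2 : 1 ≤ (ϱ-r)^2 := by
        rw [pow_two, ← abs_mul_abs_self (ϱ-r)]
        calc (1:ℝ) = 1*1 := by ring
          _ ≤ |ϱ-r| * |ϱ-r| := mul_le_mul hd1' hd1' zero_le_one (abs_nonneg _)
      have hd2R : (ϱ-r)^2 ≤ R^2 := by
        rw [pow_two, pow_two, ← abs_mul_abs_self (ϱ-r)]
        exact mul_le_mul hdR hdR (abs_nonneg _) hR0.le
      constructor
      · rw [le_div_iff₀ hγ1]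
        have h1 : c₃ ≤ c3'/R^γ := min_le_left _ _
        have h1' : c₃*(γ-1) ≤ (c3'/R^γ)*(γ-1) := mul_le_mul_of_nonneg_right h1 hγ1.le
        have hkey : c₃*(γ-1)*|ϱ-r|^γ ≤ (c3'/R^γ)*(γ-1)*(R^γ) :=
          mul_le_mul h1' hBR hγB0 (by positivity)
        have heqq : (c3'/R^γ)*(γ-1)*(R^γ) = m*rmin := by
          rw [hc3'def]; field_simp
        have hmr : m*rmin ≤ m*rmin*(ϱ-r)^2 :=
          le_mul_of_one_le_right (mul_pos hm0 hrmin0).le hd2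
        calc c₃*|ϱ-r|^γ*(γ-1) = c₃*(γ-1)*|ϱ-r|^γ := by ring
          _ ≤ (c3'/R^γ)*(γ-1)*(R^γ) := hkey
          _ = m*rmin := heqq
          _ ≤ m*rmin*(ϱ-r)^2 := hmr
          _ ≤ N := hlow
      · rw [div_le_iff₀ hγ1]
        have s1 : M*rmax*(ϱ-r)^2 ≤ M*rmax*R^2 :=
          mul_le_mul_of_nonneg_left hd2R (mul_pos hM0 hrmax0).le
        have s2 : M*rmax*R^2 = c4'*R^2*(γ-1) := by
          rw [hc4'def]; field_simp
        have s3 : c4'*R^2*(γ-1) ≤ c₄*(γ-1) :=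
          mul_le_mul_of_nonneg_right (le_max_left _ _) hγ1.le
        have s4 : c₄*(γ-1) ≤ c₄*(γ-1)*|ϱ-r|^γ :=
          le_mul_of_one_le_right (mul_pos hc₄0 hγ1).le hB1
        calc N ≤ M*rmax*(ϱ-r)^2 := hhigh
          _ ≤ M*rmax*R^2 := s1
          _ = c4'*R^2*(γ-1) := s2
          _ ≤ c₄*(γ-1) := s3
          _ ≤ c₄*(γ-1)*|ϱ-r|^γ := s4
          _ = c₄*|ϱ-r|^γ*(γ-1) := by ring
    · push_neg at hϱR
      have hRϱ : R ≤ ϱ := hϱR.le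
      have hϱb2 : 2*b+2 ≤ ϱ := le_trans hRb hRϱ
      have hdpos : 0 < ϱ - r := by linarith
      have habs : |ϱ-r| = ϱ - r := abs_of_pos hdpos
      rw [habs]
      have hϱ1 : (1:ℝ) ≤ ϱ := by linarith
      have hϱpos : 0 < ϱ := by linarith
      have hpow : 2*b^γ + 2*γ*b^(γ-1) ≤ ϱ^(γ-1) := hR₀ ϱ (le_trans (le_max_left _ _) hRϱ)
      have hϱγeq : ϱ^(γ-1)*ϱ = ϱ^γ := by
        rw [← Real.rpow_add_one hϱpos.ne', sub_add_cancel]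
      have hrbγ : r^γ ≤ b^γ := Real.rpow_le_rpow hr0.le hrb hγ0.le
      have hrbγ1 : r^(γ-1) ≤ b^(γ-1) := Real.rpow_le_rpow hr0.le hrb (by linarith)
      have hbγ0 : (0:ℝ) ≤ b^γ := (Real.rpow_pos_of_pos hb0 _).le
      have hbγ10 : (0:ℝ) ≤ b^(γ-1) := (Real.rpow_pos_of_pos hb0 _).le
      have hlowN : ϱ^γ/2 ≤ N := by
        have e0 : r^(γ-1)*(ϱ-r) ≤ b^(γ-1)*ϱ :=
          mul_le_mul hrbγ1 (by linarith) (by linarith) hbγ10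
        have e1 : γ*(r^(γ-1)*(ϱ-r)) ≤ γ*(b^(γ-1)*ϱ) := mul_le_mul_of_nonneg_left e0 hγ0.le
        have e2 : 2*b^γ + 2*γ*b^(γ-1)*ϱ ≤ ϱ^γ := by
          have h := mul_le_mul_of_nonneg_right hpow hϱpos.le
          have h' : 2*b^γ ≤ 2*b^γ*ϱ := le_mul_of_one_le_right (by linarith [hbγ0]) hϱ1
          have hexp : (2*b^γ + 2*γ*b^(γ-1))*ϱ = 2*b^γ*ϱ + 2*γ*b^(γ-1)*ϱ := by ring
          linarith [h, h', hϱγeq, hexp]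
        rw [hNdef]; linarith [e1, e2, hrbγ]
      have hupN : N ≤ ϱ^γ := by
        have e3 : 0 ≤ γ*r^(γ-1)*(ϱ-r) := mul_nonneg (mul_nonneg hγ0.le hrγ10) hdpos.le
        rw [hNdef]; linarith [e3, hrγ0]
      have hBϱ : (ϱ-r)^γ ≤ ϱ^γ := Real.rpow_le_rpow hdpos.le (by linarith) hγ0.le
      have hhalf : ϱ/2 ≤ ϱ - r := by linarith
      have hdiv : ϱ^γ ≤ 2^γ*(ϱ-r)^γ := by
        have h1 : (ϱ/2)^γ ≤ (ϱ-r)^γ := Real.rpow_le_rpow (by positivity) hhalf hγ0.le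
        have h2 : (ϱ/2)^γ = ϱ^γ/2^γ := Real.div_rpow hϱpos.le (by norm_num : (0:ℝ) ≤ 2) γ
        have h3 : 0 < (2:ℝ)^γ := Real.rpow_pos_of_pos two_pos γ
        rw [h2] at h1
        have := (div_le_iff₀ h3).1 h1
        linarith [this]
      have hBnn : 0 ≤ (ϱ-r)^γ := Real.rpow_nonneg hdpos.le γ
      constructor
      · rw [le_div_iff₀ hγ1]
        have hc3half : c₃*(γ-1) ≤ 1/2 := by
          have h1 : c₃ ≤ 1/(2*(γ-1)) := min_le_right _ _
          have h1' := mul_le_mul_of_nonneg_right h1 hγ1.le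
          have heq : (1/(2*(γ-1)))*(γ-1) = 1/2 := by
            field_simp
          linarith
        have s1 : c₃*(γ-1)*(ϱ-r)^γ ≤ (1/2)*(ϱ-r)^γ :=
          mul_le_mul_of_nonneg_right hc3half hBnn
        have s2 : (1/2:ℝ)*(ϱ-r)^γ ≤ (1/2)*ϱ^γ := mul_le_mul_of_nonneg_left hBϱ (by norm_num)
        calc c₃*(ϱ-r)^γ*(γ-1) = c₃*(γ-1)*(ϱ-r)^γ := by ring
          _ ≤ (1/2)*(ϱ-r)^γ := s1
          _ ≤ (1/2)*ϱ^γ := s2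
          _ ≤ N := by linarith [hlowN]
      · rw [div_le_iff₀ hγ1]
        have h2γ : (2:ℝ)^γ ≤ c₄*(γ-1) := by
          have h1 : (2:ℝ)^γ/(γ-1) ≤ c₄ := le_max_right _ _
          have h1' := mul_le_mul_of_nonneg_right h1 hγ1.le
          have heq : ((2:ℝ)^γ/(γ-1))*(γ-1) = 2^γ := div_mul_cancel₀ _ hγ1.ne'
          linarith
        have s1 : 2^γ*(ϱ-r)^γ ≤ (c₄*(γ-1))*(ϱ-r)^γ := mul_le_mul_of_nonneg_right h2γ hBnn
        calc N ≤ ϱ^γ := hupN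
          _ ≤ 2^γ*(ϱ-r)^γ := hdiv
          _ ≤ (c₄*(γ-1))*(ϱ-r)^γ := s1
          _ = c₄*(ϱ-r)^γ*(γ-1) := by ring
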